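/- Let s be a positive integer with gcd(s, m) = 1, let 1 ≤ k < n, let g_1, …, g_n ∈ F_{q^m} be linearly independent over F_q, and let C ⊆ F_{q^m}^n be the generalized Gabidulin code with parameter s, i.e., the F_{q^m}-span of the Moore vectors (g_1^{[si]}, …, g_n^{[si]}) for i = 0, …, k − 1. Then dim_{F_{q^m}}(C ∩ C^{[s]}) = k − 1. -/

import Mathlib

open Matrix

/-- The rank over the subfield `Fq` of a vector with entries in `K`:
the `Fq`-dimension of the `Fq`-span of its coordinates. -/
noncomputable def rankQ (Fq : Type) {K : Type} [Field Fq] [Field K] [Algebra Fq K] {n : ℕ}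
    (v : Fin n → K) : ℕ :=
  Module.finrank Fq (Submodule.span Fq (Set.range v))

/-- The minimum rank distance of a linear rank-metric code `C ⊆ K^n`. -/
noncomputable def minRankDist (Fq : Type) {K : Type} [Field Fq] [Field K] [Algebra Fq K] {n : ℕ}
    (C : Submodule K (Fin n → K)) : ℕ :=
  sInf (rankQ Fq '' {c : Fin n → K | c ∈ C ∧ c ≠ 0})

/-- A linear code `C ⊆ K^n` of dimension `k` over `K` is MRD if its minimum
rank distance equals `n - k + 1`. -/
def IsMRD (Fq : Type) {K : Type} [Field Fq] [Field K] [Algebra Fq K] {n : ℕ}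
    (C : Submodule K (Fin n → K)) (k : ℕ) : Prop :=
  Module.finrank K C = k ∧ minRankDist Fq C = n - k + 1

/-- `G` is a generator matrix of `C`: its rows form a `K`-basis of `C`. -/
def IsGenMat {K : Type} [Field K] {k n : ℕ} (C : Submodule K (Fin n → K))
    (G : Matrix (Fin k) (Fin n) K) : Prop :=
  LinearIndependent K (fun i => G i) ∧ Submodule.span K (Set.range fun i => G i) = C

section GabAux
open Finset
variable {Fq K : Type} [Field Fq] [Field K] [Algebra Fq K]

lemma skew_ker_bound (σ : K →ₐ[Fq] K)
    (hfix : ∀ x : K, σ x = x → ∃ a : Fq, algebraMap Fq K a = x) :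
    ∀ (r : ℕ) (a : ℕ → K), a r ≠ 0 → ∀ v : Fin (r + 1) → K, LinearIndependent Fq v →
      (∀ j, ∑ i ∈ range (r + 1), a i * (σ ^ i) (v j) = 0) → False := by
  intro r
  induction r with
  | zero =>
    intro a ha v hv hker
    have h0 := hker 0
    simp only [zero_add, range_one, sum_singleton, pow_zero, AlgHom.one_apply] at h0
    exact hv.ne_zero 0 ((mul_eq_zero.mp h0).resolve_left ha)
  | succ r ih =>
    intro a ha v hv hker
    have hv0 : v 0 ≠ 0 := hv.ne_zero 0
    set u : Fin (r + 2) → K := fun j => v j / v 0 with hu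
    set b : ℕ → K := fun i => a i * (σ ^ i) (v 0) with hbdef
    have hinj : ∀ i : ℕ, Function.Injective (σ ^ i : K →ₐ[Fq] K) :=
      fun i => (σ ^ i : K →ₐ[Fq] K).toRingHom.injective
    have hb : ∀ j, ∑ i ∈ range (r + 2), b i * (σ ^ i) (u j) = 0 := by
      intro j
      have key : ∀ i, b i * (σ ^ i) (u j) = a i * (σ ^ i) (v j) := by
        intro i
        have h1 : (σ ^ i) (v 0) * (σ ^ i) (u j) = (σ ^ i) (v j) := by
          rw [← _root_.map_mul]; congr 1; simp only [hu]; field_simp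
        rw [hbdef]; dsimp only; rw [mul_assoc, h1]
      simp only [key]
      exact hker j
    have hsum0 : ∑ i ∈ range (r + 2), b i = 0 := by
      have h0 := hb 0
      have hu0 : u 0 = 1 := div_self hv0
      simpa [hu0] using h0
    set c : ℕ → K := fun i => -(∑ t ∈ range (i + 1), b t) with hcdef
    have hcr1 : c (r + 1) = 0 := by
      rw [hcdef]; dsimp only; rw [hsum0, neg_zero]
    have hcr : c r = b (r + 1) := by
      have h2 := Finset.sum_range_succ b (r + 1)
      rw [hsum0] at h2
      rw [hcdef]; dsimp only
      rw [eq_neg_of_add_eq_zero_left h2.symm, neg_neg]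
    -- the key telescoping identity
    have key : ∀ x : K, ∑ i ∈ range (r + 2), c i * ((σ ^ i) (σ x) - (σ ^ i) x)
        = ∑ i ∈ range (r + 2), b i * (σ ^ i) x := by
      intro x
      have htel := Finset.sum_range_sub (fun i => (∑ t ∈ range i, b t) * (σ ^ i) x) (r + 2)
      have h0 : (∑ t ∈ range 0, b t) * (σ ^ 0) x = 0 := by simp
      have htop : (∑ t ∈ range (r + 2), b t) * (σ ^ (r + 2)) x = 0 := by
        rw [hsum0, zero_mul]
      rw [h0, htop, sub_zero] at htel
      have hterm : ∀ i, (∑ t ∈ range (i + 1), b t) * (σ ^ (i + 1)) x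
            - (∑ t ∈ range i, b t) * (σ ^ i) x
          = -(c i * ((σ ^ i) (σ x) - (σ ^ i) x)) + b i * (σ ^ i) x := by
        intro i
        have hpow : (σ ^ (i + 1)) x = (σ ^ i) (σ x) := by
          rw [pow_succ]; rfl
        have hsplit : ∑ t ∈ range (i + 1), b t = -(c i) := by
          rw [hcdef]; dsimp only; rw [neg_neg]
        have hsub : ∑ t ∈ range i, b t = -(c i) - b i := by
          have := Finset.sum_range_succ b i
          rw [hsplit] at this
          exact eq_sub_of_add_eq this.symm
        rw [hpow, hsplit, hsub]; ring
      calc ∑ i ∈ range (r + 2), c i * ((σ ^ i) (σ x) - (σ ^ i) x)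
          = ∑ i ∈ range (r + 2), (-((∑ t ∈ range (i+1), b t) * (σ ^ (i+1)) x
              - (∑ t ∈ range i, b t) * (σ ^ i) x) + b i * (σ ^ i) x) := by
            refine Finset.sum_congr rfl fun i _ => ?_
            rw [hterm i]; ring
        _ = -(∑ i ∈ range (r + 2), ((∑ t ∈ range (i+1), b t) * (σ ^ (i+1)) x
              - (∑ t ∈ range i, b t) * (σ ^ i) x)) + ∑ i ∈ range (r + 2), b i * (σ ^ i) x := by
            rw [Finset.sum_add_distrib, Finset.sum_neg_distrib]
        _ = ∑ i ∈ range (r + 2), b i * (σ ^ i) x := by rw [htel]; ring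
    -- new independent family
    set w : Fin (r + 1) → K := fun j => σ (u j.succ) - u j.succ with hwdef
    have hwker : ∀ j, ∑ i ∈ range (r + 1), c i * (σ ^ i) (w j) = 0 := by
      intro j
      have h1 : ∑ i ∈ range (r + 2), c i * (σ ^ i) (w j) = 0 := by
        have := key (u j.succ)
        simp only [hwdef, _root_.map_sub] at *
        rw [this]
        exact hb j.succ
      rw [Finset.sum_range_succ, hcr1, zero_mul, add_zero] at h1
      exact h1
    have hwind : LinearIndependent Fq w := by
      rw [Fintype.linearIndependent_iff]
      intro lam hlam
      set y : K := ∑ j, lam j • u j.succ with hy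
      have hσy : σ y = y := by
        have h1 : σ y - y = ∑ j, lam j • w j := by
          rw [hy, _root_.map_sum, ← Finset.sum_sub_distrib]
          refine Finset.sum_congr rfl fun j _ => ?_
          rw [_root_.map_smul, hwdef, smul_sub]
        rw [hlam] at h1
        exact sub_eq_zero.mp h1
      obtain ⟨mu, hmu⟩ := hfix y hσy
      -- build coefficients on Fin (r+2)
      set nu : Fin (r + 2) → Fq := Fin.cases (-mu) lam with hnu
      have hsum : ∑ j, nu j • v j = 0 := by
        rw [Fin.sum_univ_succ]
        have h2 : ∀ j : Fin (r + 1), nu j.succ • v j.succ = v 0 * (lam j • u j.succ) := by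
          intro j
          have : v j.succ = v 0 * u j.succ := by simp only [hu]; field_simp
          rw [hnu]
          simp only [Fin.cases_succ]
          rw [this, mul_smul_comm]
        simp only [h2]
        rw [← Finset.mul_sum, ← hy, ← hmu]
        have : nu 0 = -mu := by rw [hnu]; simp
        rw [this]
        rw [Algebra.smul_def, _root_.map_neg]
        ring
      have hall := Fintype.linearIndependent_iff.mp hv nu hsum
      intro j
      have := hall j.succ
      rw [hnu] at this
      simpa using this
    exact ih c (hcr ▸ (by
      rw [hbdef]; dsimp only
      exact mul_ne_zero ha (fun h => hv0 (hinj (r+1) (by rw [h, _root_.map_zero])))))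
      w hwind hwker

lemma moore_li (σ : K →ₐ[Fq] K)
    (hfix : ∀ x : K, σ x = x → ∃ a : Fq, algebraMap Fq K a = x)
    {n : ℕ} (g : Fin n → K) (hg : LinearIndependent Fq g) (r : ℕ) (hr : r ≤ n) :
    LinearIndependent K (fun i : Fin r => fun j : Fin n => (σ ^ (i : ℕ)) (g j)) := by
  classical
  rw [Fintype.linearIndependent_iff]
  intro aa hsum
  by_contra hne
  push_neg at hne
  obtain ⟨t0, ht0⟩ := hne
  set S := Finset.univ.filter (fun i : Fin r => aa i ≠ 0) with hS
  have hSne : S.Nonempty := ⟨t0, by simp [hS, ht0]⟩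
  set t := S.max' hSne with ht
  have hat : aa t ≠ 0 := by
    have := Finset.mem_filter.mp (S.max'_mem hSne)
    exact this.2
  have hmax : ∀ i : Fin r, (t : ℕ) < (i : ℕ) → aa i = 0 := by
    intro i hi
    by_contra h
    have hmem : i ∈ S := by simp [hS, h]
    have := S.le_max' i hmem
    rw [← ht] at this
    exact absurd (Fin.le_iff_val_le_val.mp this) (Nat.not_le_of_lt hi)
  set a' : ℕ → K := fun i => if h : i < r then aa ⟨i, h⟩ else 0 with ha'
  have hta : a' (t : ℕ) ≠ 0 := by
    rw [ha']; dsimp only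
    rw [dif_pos t.isLt]
    simpa using hat
  have htn : (t : ℕ) + 1 ≤ n := le_trans t.isLt hr
  set v : Fin ((t : ℕ) + 1) → K := fun j => g (Fin.castLE htn j) with hvdef
  have hv : LinearIndependent Fq v := hg.comp _ (Fin.castLE_injective htn)
  have hker : ∀ j, ∑ i ∈ range ((t : ℕ) + 1), a' i * (σ ^ i) (v j) = 0 := by
    intro j
    set j' : Fin n := Fin.castLE htn j with hj'
    have h1 : ∑ i : Fin r, aa i * (σ ^ (i : ℕ)) (g j') = 0 := by
      have := congr_fun hsum j'
      simpa [Finset.sum_apply] using this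
    have h2 : ∑ i ∈ range r, a' i * (σ ^ i) (g j') = 0 := by
      rw [Finset.sum_range fun i => a' i * (σ ^ i) (g j'), ← h1]
      refine Finset.sum_congr rfl fun i _ => ?_
      congr 1
      rw [ha']; dsimp only
      rw [dif_pos i.isLt]
    have h3 : ∑ i ∈ range ((t : ℕ) + 1), a' i * (σ ^ i) (g j')
        = ∑ i ∈ range r, a' i * (σ ^ i) (g j') := by
      refine Finset.sum_subset ?_ ?_
      · intro i hi
        rw [Finset.mem_range] at hi ⊢
        have := t.isLt
        omega
      · intro i hir hit
        rw [Finset.mem_range] at hir hit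
        push_neg at hit
        have : a' i = 0 := by
          rw [ha']; dsimp only
          rw [dif_pos hir]
          exact hmax ⟨i, hir⟩ (by simp only [Fin.val_mk]; omega)
        rw [this, zero_mul]
    rw [hvdef]; dsimp only
    rw [h3, h2]
  exact skew_ker_bound σ hfix (t : ℕ) a' hta v hv hker

end GabAux

open Finset in
lemma exists_frob (q m s : ℕ) (Fq K : Type) [Field Fq] [Fintype Fq] [Field K] [Fintype K]
    [Algebra Fq K] (hq : Fintype.card Fq = q) (hK : Fintype.card K = q ^ m)
    (hs : 0 < s) (hgcd : Nat.gcd s m = 1) :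
    ∃ σ : K →ₐ[Fq] K, (∀ x, σ x = x ^ q ^ s) ∧
      (∀ x, σ x = x → ∃ a, algebraMap Fq K a = x) := by
  classical
  have hq2 : 1 < q := hq ▸ Fintype.one_lt_card
  have hm : 0 < m := by
    rcases Nat.eq_zero_or_pos m with h | h
    · exfalso
      have := Fintype.one_lt_card (α := K)
      rw [hK, h, pow_zero] at this
      omega
    · exact h
  set p := ringChar Fq with hpdef
  haveI : CharP Fq p := ringChar.charP Fq
  obtain ⟨e, hpp, hcard⟩ := FiniteField.card Fq p
  haveI : Fact p.Prime := ⟨hpp⟩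
  haveI : CharP K p := charP_of_injective_algebraMap (algebraMap Fq K).injective p
  have hqe : q = p ^ (e : ℕ) := by rw [← hq, hcard]
  have hpow : ∀ x : K, iterateFrobenius K p ((e : ℕ) * s) x = x ^ q ^ s := by
    intro x
    rw [iterateFrobenius_def, hqe, ← pow_mul]
  refine ⟨⟨iterateFrobenius K p ((e : ℕ) * s), fun a => ?_⟩, fun x => hpow x, ?_⟩
  · show iterateFrobenius K p ((e : ℕ) * s) (algebraMap Fq K a) = algebraMap Fq K a
    rw [hpow, ← _root_.map_pow]
    congr 1
    rw [← hq]
    exact FiniteField.pow_card_pow s a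
  · intro x hx
    have hx' : x ^ q ^ s = x := by rw [← hpow x]; exact hx
    have hiter : ∀ j : ℕ, x ^ q ^ (s * j) = x := by
      intro j
      induction j with
      | zero => simp
      | succ j ih =>
        have : s * (j + 1) = s * j + s := by ring
        rw [this, pow_add, pow_mul, ih, hx']
    obtain ⟨t, u, hst⟩ : ∃ t u : ℕ, s * t = m * u + 1 := by
      by_cases hm1 : m = 1
      · exact ⟨1, s - 1, by subst hm1; omega⟩
      · have hco : Nat.Coprime s m := hgcd
        obtain ⟨t, -, ht⟩ := Nat.exists_mul_mod_eq_one_of_coprime hco (by omega)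
        refine ⟨t, s * t / m, ?_⟩
        have hd := Nat.div_add_mod (s * t) m
        rw [ht] at hd
        omega
    have hq1 : x ^ q = x := by
      have h1 := hiter t
      rw [hst] at h1
      have h2 : x ^ q ^ (m * u) = x := by
        rw [pow_mul q m u, ← hK]
        exact FiniteField.pow_card_pow u x
      calc x ^ q = (x ^ q ^ (m * u)) ^ q := by rw [h2]
        _ = x ^ (q ^ (m * u) * q) := by rw [← pow_mul]
        _ = x ^ q ^ (m * u + 1) := by rw [pow_succ]
        _ = x := h1
    set P : Polynomial K := Polynomial.X ^ q - Polynomial.X with hP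
    have hPne : P ≠ 0 := FiniteField.X_pow_card_sub_X_ne_zero K hq2
    have hdeg : P.natDegree = q := FiniteField.X_pow_card_sub_X_natDegree_eq K hq2
    set T : Finset K := Finset.univ.image (algebraMap Fq K) with hT
    have hTcard : T.card = q := by
      rw [hT, Finset.card_image_of_injective _ (algebraMap Fq K).injective,
        Finset.card_univ, hq]
    by_contra hxT
    push_neg at hxT
    have hxnot : x ∉ T := by
      rw [hT, Finset.mem_image]
      rintro ⟨a, -, ha⟩
      exact hxT a ha
    have hsub : insert x T ⊆ P.roots.toFinset := by
      intro y hy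
      rw [Multiset.mem_toFinset, Polynomial.mem_roots hPne]
      have hyq : y ^ q = y := by
        rcases Finset.mem_insert.mp hy with h | h
        · rw [h]; exact hq1
        · rw [hT, Finset.mem_image] at h
          obtain ⟨a, -, rfl⟩ := h
          rw [← _root_.map_pow]
          congr 1
          rw [← hq]
          exact FiniteField.pow_card a
      show P.IsRoot y
      rw [hP]
      simp [Polynomial.IsRoot, sub_eq_zero, hyq]
    have hle : (insert x T).card ≤ q := by
      refine le_trans (Finset.card_le_card hsub) (le_trans (Multiset.toFinset_card_le _) ?_)
      rw [← hdeg]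
      exact Polynomial.card_roots' P
    rw [Finset.card_insert_of_notMem hxnot, hTcard] at hle
    omega

open Finset in
/-- a generalized Gabidulin code `C` of dimension `1 ≤ k < n` with
parameter `s` (`gcd(s,m) = 1`) satisfies `dim(C ∩ C^[s]) = k - 1`. -/
theorem stmt11 {q m s n k : ℕ} (Fq K : Type) [Field Fq] [Fintype Fq] [Field K] [Fintype K]
    [Algebra Fq K] (hq : Fintype.card Fq = q) (hK : Fintype.card K = q ^ m)
    (hs : 0 < s) (hgcd : Nat.gcd s m = 1) (hk : 1 ≤ k) (hkn : k < n)
    (g : Fin n → K) (hg : LinearIndependent Fq g)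
    (C : Submodule K (Fin n → K))
    (hC : C = Submodule.span K
      (Set.range fun i : Fin k => fun j : Fin n => (g j) ^ q ^ (s * (i : ℕ)))) :
    Module.finrank K
        (C ⊓ Submodule.span K
          ((fun v : Fin n → K => fun j => (v j) ^ q ^ s) '' (C : Set (Fin n → K))) :
        Submodule K (Fin n → K)) = k - 1 := by
  obtain ⟨σ, hσ, hfix⟩ := exists_frob q m s Fq K hq hK hs hgcd
  have hq2 : 1 < q := hq ▸ Fintype.one_lt_card
  set V : ℕ → (Fin n → K) := fun i j => (σ ^ i) (g j) with hV
  have hσpow : ∀ (i : ℕ) (x : K), (σ ^ i) x = x ^ q ^ (s * i) := by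
    intro i
    induction i with
    | zero => intro x; simp
    | succ i ih =>
      intro x
      have h1 : (σ ^ (i + 1)) x = (σ ^ i) (σ x) := by rw [pow_succ]; rfl
      rw [h1, ih, hσ, ← pow_mul, ← pow_add]
      congr 2
      ring
  have hCV : C = Submodule.span K (Set.range fun i : Fin k => V (i : ℕ)) := by
    rw [hC]
    congr 1
    ext x
    constructor <;> rintro ⟨i, rfl⟩ <;> refine ⟨i, ?_⟩ <;> funext j <;>
      rw [hV] <;> simp only [hσpow]
  set φ : (Fin n → K) → (Fin n → K) := fun v => fun j => (v j) ^ q ^ s with hφ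
  have hφσ : ∀ v j, φ v j = σ (v j) := by intro v j; rw [hφ, hσ]
  set D : Submodule K (Fin n → K) := Submodule.span K (φ '' (C : Set (Fin n → K))) with hDdef
  have hVsucc : ∀ i : ℕ, φ (V i) = V (i + 1) := by
    intro i
    funext j
    rw [hφσ, hV]
    show σ ((σ ^ i) (g j)) = (σ ^ (i + 1)) (g j)
    rw [pow_succ']
    rfl
  have hD : D = Submodule.span K (Set.range fun i : Fin k => V ((i : ℕ) + 1)) := by
    apply le_antisymm
    · rw [hDdef]
      rw [Submodule.span_le]
      rintro y ⟨c, hc, rfl⟩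
      rw [hCV] at hc
      induction hc using Submodule.span_induction with
      | mem x hx =>
        obtain ⟨i, rfl⟩ := hx
        rw [hVsucc]
        exact Submodule.subset_span ⟨i, rfl⟩
      | zero =>
        have : φ 0 = 0 := by
          funext j
          rw [hφ]
          exact zero_pow (pow_pos (by omega : 0 < q) s).ne'
        rw [this]; exact Submodule.zero_mem _
      | add x y hx hy ihx ihy =>
        have : φ (x + y) = φ x + φ y := by
          funext j
          simp only [Pi.add_apply, hφσ]
          rw [_root_.map_add]
        rw [this]; exact Submodule.add_mem _ ihx ihy
      | smul a x hx ihx =>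
        have : φ (a • x) = σ a • φ x := by
          funext j
          simp only [Pi.smul_apply, smul_eq_mul, hφσ]
          rw [_root_.map_mul]
        rw [this]; exact Submodule.smul_mem _ _ ihx
    · rw [Submodule.span_le]
      rintro y ⟨i, rfl⟩
      show V ((i : ℕ) + 1) ∈ D
      rw [← hVsucc]
      exact Submodule.subset_span ⟨V (i : ℕ), by
        rw [hCV]; exact Submodule.subset_span ⟨i, rfl⟩, rfl⟩
  have hk1n : k + 1 ≤ n := hkn
  have hLI : ∀ r : ℕ, r ≤ n → LinearIndependent K (fun i : Fin r => V (i : ℕ)) :=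
    fun r hr => moore_li σ hfix g hg r hr
  have hfinC : Module.finrank K C = k := by
    rw [hCV, finrank_span_eq_card (hLI k (le_of_lt hkn))]
    simp
  have hfinD : Module.finrank K D = k := by
    have hli : LinearIndependent K (fun i : Fin k => V ((i : ℕ) + 1)) := by
      have h1 := (hLI (k + 1) hk1n).comp Fin.succ (Fin.succ_injective k)
      have funeq : (fun i : Fin k => V ((i : ℕ) + 1))
          = (fun i : Fin (k + 1) => V (i : ℕ)) ∘ Fin.succ := by
        funext i
        simp [Fin.val_succ]
      rw [funeq]
      exact h1
    rw [hD, finrank_span_eq_card hli]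
    simp
  have hsup : C ⊔ D = Submodule.span K (Set.range fun i : Fin (k + 1) => V (i : ℕ)) := by
    apply le_antisymm
    · apply sup_le
      · rw [hCV, Submodule.span_le]
        rintro y ⟨i, rfl⟩
        exact Submodule.subset_span ⟨⟨(i : ℕ), by omega⟩, rfl⟩
      · rw [hD, Submodule.span_le]
        rintro y ⟨i, rfl⟩
        exact Submodule.subset_span ⟨⟨(i : ℕ) + 1, by omega⟩, rfl⟩
    · rw [Submodule.span_le]
      rintro y ⟨i, rfl⟩
      by_cases hik : (i : ℕ) < k
      · apply Submodule.mem_sup_left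
        rw [hCV]
        exact Submodule.subset_span ⟨⟨(i : ℕ), hik⟩, rfl⟩
      · have hii := i.isLt
        have hik' : (i : ℕ) = k := by omega
        apply Submodule.mem_sup_right
        rw [hD]
        refine Submodule.subset_span ⟨⟨k - 1, by omega⟩, ?_⟩
        show V ((k - 1) + 1) = V (i : ℕ)
        have hkk : k - 1 + 1 = k := by omega
        rw [hkk, hik']
  have hfinsup : Module.finrank K (C ⊔ D : Submodule K (Fin n → K)) = k + 1 := by
    rw [hsup, finrank_span_eq_card (hLI (k + 1) hk1n)]
    simp
  have hdim := Submodule.finrank_sup_add_finrank_inf_eq C D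
  rw [hfinC, hfinD, hfinsup] at hdim
  have hgoal : Module.finrank K (C ⊓ D : Submodule K (Fin n → K)) = k - 1 := by omega
  exact hgoal
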